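/- Let a, η be real numbers and τ > 0. Set A = a²η² + τ², V(x) = (1 − τx²)² + a²η²x⁴, and x⁺ = √(2τ/A). Then ∫₀^{x⁺} x²(1 − τx²)/√(1 − V(x)) dx = √(2τ)(3a²η² − τ²)/(3A²) and ∫₀^{x⁺} a²η x⁴/√(1 − V(x)) dx = 2a²η(2τ)^{3/2}/(3A²). -/

import Mathlib

set_option maxHeartbeats 1000000


/-- Closed form of the period-map components `Θ²₊` and `Θ³₊` for Family 1 (`b = 0`). -/
theorem stmt_9 (a η τ : ℝ) (hτ : 0 < τ)
    (A : ℝ) (hA : A = a^2*η^2 + τ^2)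
    (V : ℝ → ℝ) (hV : ∀ x, V x = (1 - τ*x^2)^2 + a^2*η^2*x^4)
    (xp : ℝ) (hxp : xp = Real.sqrt (2*τ/A)) :
    (∫ x in (0:ℝ)..xp, x^2*(1 - τ*x^2) / Real.sqrt (1 - V x))
        = Real.sqrt (2*τ) * (3*a^2*η^2 - τ^2) / (3*A^2) ∧
    (∫ x in (0:ℝ)..xp, a^2*η*x^4 / Real.sqrt (1 - V x))
        = 2*a^2*η*(Real.sqrt (2*τ))^3 / (3*A^2) := by
  have hA0 : 0 < A := by nlinarith [sq_nonneg (a*η)]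
  have hxp0 : 0 < xp := by
    rw [hxp]; exact Real.sqrt_pos.mpr (by positivity)
  have hxp2 : A * xp^2 = 2*τ := by
    rw [hxp, Real.sq_sqrt (by positivity : (0:ℝ) ≤ 2*τ/A)]
    field_simp
  have hs : ∀ x : ℝ, 1 - V x = x^2 * (2*τ - A*x^2) := by
    intro x; rw [hV, hA]; ring
  have hVc : Continuous fun x : ℝ => 1 - V x := by
    have : (fun x : ℝ => 1 - V x) = fun x => x^2 * (2*τ - A*x^2) := funext hs
    rw [this]; continuity
  -- main computation lemma
  have main : ∀ (g : ℝ → ℝ) (p q M : ℝ), Continuous g →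
      (∀ x ∈ Set.Icc (0:ℝ) xp, |g x| ≤ M * x) →
      (∀ x : ℝ, g x = -A*x^2*(p + 3*q*(2*τ - A*x^2))) →
      (∫ x in (0:ℝ)..xp, g x / Real.sqrt (1 - V x))
        = -(Real.sqrt (2*τ) * (p + q*(2*τ))) := by
    intro g p q M hg hgM hgid
    set G : ℝ → ℝ := fun y => Real.sqrt (2*τ - A*y^2) * (p + q*(2*τ - A*y^2)) with hG
    have hM : 0 ≤ M := by
      have := hgM xp ⟨hxp0.le, le_refl _⟩
      nlinarith [abs_nonneg (g xp)]
    have hGcont : ContinuousOn G (Set.Icc 0 xp) := by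
      apply Continuous.continuousOn
      have hsc : Continuous fun y : ℝ => 2*τ - A*y^2 := by continuity
      exact (hsc.sqrt).mul (by fun_prop)
    have hderiv : ∀ x ∈ Set.Ioo (0:ℝ) xp,
        HasDerivAt G (g x / Real.sqrt (1 - V x)) x := by
      intro x hx
      obtain ⟨hx0, hxlt⟩ := hx
      have hsx : 0 < 2*τ - A*x^2 := by
        have hx2 : x^2 < xp^2 := by nlinarith
        nlinarith [hxp2, hx2]
      have hs' : HasDerivAt (fun y : ℝ => 2*τ - A*y^2) (-(A*(2*x))) x := by
        have h1 : HasDerivAt (fun y : ℝ => y^2) (2*x) x := by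
          simpa using hasDerivAt_pow 2 x
        simpa using (h1.const_mul A).const_sub (2*τ)
      have hsq : HasDerivAt (fun y : ℝ => Real.sqrt (2*τ - A*y^2))
          ((-(A*(2*x))) / (2 * Real.sqrt (2*τ - A*x^2))) x :=
        hs'.sqrt hsx.ne'
      have hlin : HasDerivAt (fun y : ℝ => p + q*(2*τ - A*y^2)) (q * (-(A*(2*x)))) x :=
        (hs'.const_mul q).const_add p
      have htot := hsq.mul hlin
      have hu0 : Real.sqrt (2*τ - A*x^2) ≠ 0 := (Real.sqrt_pos.mpr hsx).ne'
      have hu2 : Real.sqrt (2*τ - A*x^2) ^ 2 = 2*τ - A*x^2 := Real.sq_sqrt hsx.le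
      refine htot.congr_deriv ?_
      symm
      rw [hs x, Real.sqrt_mul (sq_nonneg x), Real.sqrt_sq hx0.le, hgid x]
      set u := Real.sqrt (2*τ - A*x^2)
      field_simp
      linear_combination (2*q) * hu2
    have hint : IntervalIntegrable (fun x => g x / Real.sqrt (1 - V x)) MeasureTheory.volume 0 xp := by
      have hbase : IntervalIntegrable (fun x : ℝ => x ^ (-(1/2) : ℝ))
          MeasureTheory.volume 0 xp := intervalIntegral.intervalIntegrable_rpow' (by norm_num)
      have hbase2 : IntervalIntegrable (fun x : ℝ => (xp - x) ^ (-(1/2) : ℝ))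
          MeasureTheory.volume 0 xp := by
        simpa using (hbase.comp_sub_left xp).symm
      have hCint : IntervalIntegrable
          (fun x : ℝ => (M / Real.sqrt (A*xp)) * (xp - x) ^ (-(1/2) : ℝ))
          MeasureTheory.volume 0 xp := hbase2.const_mul _
      apply hCint.mono_fun'
      · exact ((hg.measurable).div (hVc.sqrt.measurable)).aestronglyMeasurable.restrict
      · have hIoc : Set.uIoc (0:ℝ) xp = Set.Ioc 0 xp := Set.uIoc_of_le hxp0.le
        refine Filter.eventually_of_mem (MeasureTheory.self_mem_ae_restrict
          (by rw [hIoc]; exact measurableSet_Ioc)) ?_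
        intro x hx
        rw [hIoc] at hx
        obtain ⟨hx0, hxle⟩ := hx
        rcases eq_or_lt_of_le hxle with heq | hxlt
        · have h0 : Real.sqrt (1 - V x) = 0 := by
            rw [hs x]
            have hz : 2*τ - A*x^2 = 0 := by rw [heq]; linarith [hxp2]
            rw [hz, mul_zero, Real.sqrt_zero]
          show ‖g x / Real.sqrt (1 - V x)‖ ≤ M / Real.sqrt (A*xp) * (xp - x) ^ (-(1/2) : ℝ)
          rw [h0, div_zero, norm_zero]
          have h1 : (0:ℝ) ≤ (xp - x) ^ (-(1/2) : ℝ) :=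
            Real.rpow_nonneg (by linarith) _
          have h2 : (0:ℝ) ≤ M / Real.sqrt (A*xp) := by positivity
          exact mul_nonneg h2 h1
        · have hsx : 0 < 2*τ - A*x^2 := by
            have hx2 : x^2 < xp^2 := by nlinarith
            nlinarith [hxp2, hx2]
          have hsqx : Real.sqrt (1 - V x) = x * Real.sqrt (2*τ - A*x^2) := by
            rw [hs x, Real.sqrt_mul (sq_nonneg x), Real.sqrt_sq hx0.le]
          have hspos : 0 < Real.sqrt (2*τ - A*x^2) := Real.sqrt_pos.mpr hsx
          have hAxp : (0:ℝ) < A * xp := by positivity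
          have hd : (0:ℝ) < xp - x := by linarith
          have hlow : Real.sqrt (A*xp) * Real.sqrt (xp - x) ≤ Real.sqrt (2*τ - A*x^2) := by
            rw [← Real.sqrt_mul hAxp.le]
            apply Real.sqrt_le_sqrt
            nlinarith [hxp2]
          have hrpow : (xp - x) ^ (-(1/2) : ℝ) = (Real.sqrt (xp - x))⁻¹ := by
            rw [Real.sqrt_eq_rpow, ← Real.rpow_neg hd.le]
          have hlowpos : 0 < Real.sqrt (A*xp) * Real.sqrt (xp - x) := by positivity
          have key : |g x| / (x * Real.sqrt (2*τ - A*x^2))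
              ≤ M / Real.sqrt (A*xp) * (Real.sqrt (xp - x))⁻¹ := by
            have hden : 0 < x * Real.sqrt (2*τ - A*x^2) := by positivity
            have h1 : |g x| / (x * Real.sqrt (2*τ - A*x^2)) ≤ (M * x) / (x * Real.sqrt (2*τ - A*x^2)) :=
              (div_le_div_iff_of_pos_right hden).mpr (hgM x ⟨hx0.le, hxle⟩)
            have h2 : (M * x) / (x * Real.sqrt (2*τ - A*x^2)) = M / Real.sqrt (2*τ - A*x^2) := by
              rw [div_eq_div_iff hden.ne' hspos.ne']; ring
            have h3 : M / Real.sqrt (2*τ - A*x^2)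
                ≤ M / (Real.sqrt (A*xp) * Real.sqrt (xp - x)) := by
              rcases eq_or_lt_of_le hM with hM0 | hM0
              · simp [← hM0]
              · exact (div_le_div_iff_of_pos_left hM0 hspos hlowpos).mpr hlow
            have h4 : M / (Real.sqrt (A*xp) * Real.sqrt (xp - x))
                = M / Real.sqrt (A*xp) * (Real.sqrt (xp - x))⁻¹ := by
              rw [div_mul_eq_div_div, div_eq_mul_inv]
            calc |g x| / (x * Real.sqrt (2*τ - A*x^2))
                ≤ (M * x) / (x * Real.sqrt (2*τ - A*x^2)) := h1
              _ = M / Real.sqrt (2*τ - A*x^2) := h2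
              _ ≤ M / (Real.sqrt (A*xp) * Real.sqrt (xp - x)) := h3
              _ = M / Real.sqrt (A*xp) * (Real.sqrt (xp - x))⁻¹ := h4
          show ‖g x / Real.sqrt (1 - V x)‖ ≤ M / Real.sqrt (A*xp) * (xp - x) ^ (-(1/2) : ℝ)
          calc ‖g x / Real.sqrt (1 - V x)‖
              = |g x| / (x * Real.sqrt (2*τ - A*x^2)) := by
                rw [Real.norm_eq_abs, abs_div, hsqx, abs_of_pos (mul_pos hx0 hspos)]
            _ ≤ M / Real.sqrt (A*xp) * (Real.sqrt (xp - x))⁻¹ := key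
            _ = M / Real.sqrt (A*xp) * (xp - x) ^ (-(1/2) : ℝ) := by rw [hrpow]
    have := intervalIntegral.integral_eq_sub_of_hasDerivAt_of_le hxp0.le hGcont hderiv hint
    rw [this]
    have hGxp : G xp = 0 := by
      have : 2*τ - A*xp^2 = 0 := by linarith [hxp2]
      simp [hG, this]
    have hG0 : G 0 = Real.sqrt (2*τ) * (p + q*(2*τ)) := by
      simp [hG]
    rw [hGxp, hG0, zero_sub]
  constructor
  · have h1 := main (fun x => x^2*(1 - τ*x^2)) (2*τ^2/A^2 - 1/A) (-τ/(3*A^2))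
      ((1 + τ*xp^2)*xp)
      (by fun_prop)
      (by
        intro x hx
        obtain ⟨hx0, hxle⟩ := hx
        have habs : |x^2*(1 - τ*x^2)| = x^2 * |1 - τ*x^2| := by
          rw [abs_mul, abs_of_nonneg (sq_nonneg x)]
        have h1 : |1 - τ*x^2| ≤ 1 + τ*xp^2 := by
          rw [abs_le]
          constructor <;> nlinarith [sq_nonneg x, pow_le_pow_left₀ hx0 hxle 2]
        rw [habs]
        nlinarith [sq_nonneg x, pow_le_pow_left₀ hx0 hxle 2, abs_nonneg (1 - τ*x^2),
          mul_le_mul_of_nonneg_left h1 (sq_nonneg x),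
          mul_nonneg (mul_nonneg hx0 (by nlinarith [sq_nonneg xp] : (0:ℝ) ≤ 1 + τ*xp^2)) (sub_nonneg.mpr hxle)])
      (by intro x; field_simp; ring)
    rw [h1, hA]
    field_simp
    ring
  · have h2 := main (fun x => a^2*η*x^4) (-2*τ*a^2*η/A^2) (a^2*η/(3*A^2))
      ((a^2 * |η| * xp^3))
      (by fun_prop)
      (by
        intro x hx
        obtain ⟨hx0, hxle⟩ := hx
        have habs : |a^2*η*x^4| = a^2 * |η| * x^4 := by
          rw [abs_mul, abs_mul, abs_of_nonneg (sq_nonneg a), abs_of_nonneg (by positivity : (0:ℝ) ≤ x^4)]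
        rw [habs]
        have h3 : x^3 ≤ xp^3 := pow_le_pow_left₀ hx0 hxle 3
        nlinarith [mul_nonneg (mul_nonneg (sq_nonneg a) (abs_nonneg η)) hx0,
          mul_le_mul_of_nonneg_left h3 (mul_nonneg (sq_nonneg a) (abs_nonneg η)),
          mul_nonneg (mul_nonneg (sq_nonneg a) (abs_nonneg η)) (mul_nonneg hx0 (sub_nonneg.mpr hxle))])
      (by intro x; field_simp; ring)
    rw [h2]
    have hcube : (Real.sqrt (2*τ))^3 = (2*τ) * Real.sqrt (2*τ) := by
      rw [pow_succ, Real.sq_sqrt (by positivity : (0:ℝ) ≤ 2*τ)]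
    rw [hcube]
    field_simp
    ring
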